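/- Let L be a bounded chain and G a finite MH-homogeneous L-colored graph. Then for all vertices x, y of G, χ(x,y) ≻ 0 implies χ(x) = χ(y). -/

import Mathlib

/-- An `L`-colored graph on vertex set `V`: vertex colors and symmetric,
irreflexive edge colors (color `⊥` means "no edge"). -/
structure LGraph (L : Type*) [PartialOrder L] [BoundedOrder L] (V : Type*) where
  vcol : V → L
  ecol : V → V → L
  ecol_irrefl : ∀ x, ecol x x = ⊥
  ecol_symm : ∀ x y, ecol x y = ecol y x

variable {L V : Type*} [PartialOrder L] [BoundedOrder L]

/-- An endomorphism of an `L`-colored graph weakly increases all colors. -/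
def LGraph.IsEndo (G : LGraph L V) (f : V → V) : Prop :=
  (∀ x, G.vcol x ≤ G.vcol (f x)) ∧ (∀ x y, G.ecol x y ≤ G.ecol (f x) (f y))

/-- A homomorphism from the finite induced substructure on `S` into `G`. -/
def LGraph.IsPartialHom (G : LGraph L V) (S : Set V) (f : V → V) : Prop :=
  (∀ x ∈ S, G.vcol x ≤ G.vcol (f x)) ∧
  (∀ x ∈ S, ∀ y ∈ S, G.ecol x y ≤ G.ecol (f x) (f y))

/-- `G` is MH-homogeneous: every monomorphism between finite induced
substructures extends to an endomorphism. -/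
def LGraph.MH (G : LGraph L V) : Prop :=
  ∀ S : Set V, S.Finite → ∀ f : V → V, Set.InjOn f S → G.IsPartialHom S f →
    ∃ g : V → V, G.IsEndo g ∧ ∀ x ∈ S, g x = f x

/-- `G` is HH-homogeneous: every homomorphism between finite induced
substructures extends to an endomorphism. -/
def LGraph.HH (G : LGraph L V) : Prop :=
  ∀ S : Set V, S.Finite → ∀ f : V → V, G.IsPartialHom S f →
    ∃ g : V → V, G.IsEndo g ∧ ∀ x ∈ S, g x = f x

/-- Adjacency: edge color is nonzero. -/
def LGraph.Adj (G : LGraph L V) (x y : V) : Prop := G.ecol x y ≠ ⊥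

/-- Two vertices are connected if joined by a path of edges of nonzero color. -/
def LGraph.Conn (G : LGraph L V) (x y : V) : Prop := Relation.ReflTransGen G.Adj x y

/-- `S` is a connected component of `G`. -/
def LGraph.IsComponent (G : LGraph L V) (S : Set V) : Prop :=
  ∃ x : V, S = {y | G.Conn x y}

/-- All vertices of `G` have the same color. -/
def LGraph.VertexUniform (G : LGraph L V) : Prop := ∃ α : L, ∀ x, G.vcol x = α

/-- `G` restricted to `S` is a uniform `L`-colored graph: all vertices of one
color and all edges between distinct vertices of one fixed nonzero color. -/
def LGraph.UniformOn (G : LGraph L V) (S : Set V) : Prop :=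
  (∃ α : L, ∀ x ∈ S, G.vcol x = α) ∧
  (∃ β : L, ⊥ < β ∧ ∀ x ∈ S, ∀ y ∈ S, x ≠ y → G.ecol x y = β)

/-- `G[S]` is isomorphic to `U(n, α, β)`, the connected uniform graph on `n`
vertices, all colored `α`, with all edges colored `β ≻ ⊥`. -/
def LGraph.IsU (G : LGraph L V) (S : Set V) (n : ℕ) (α β : L) : Prop :=
  S.ncard = n ∧ (∀ x ∈ S, G.vcol x = α) ∧ ⊥ < β ∧
  (∀ x ∈ S, ∀ y ∈ S, x ≠ y → G.ecol x y = β)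

/-- `L` is a diamond: all elements other than `⊥` and `⊤` are pairwise
incomparable. -/
def IsDiamond (L : Type*) [PartialOrder L] [BoundedOrder L] : Prop :=
  ∀ a b : L, a ≠ ⊥ → a ≠ ⊤ → b ≠ ⊥ → b ≠ ⊤ → a ≤ b → a = b

/-- An automorphism of an `L`-colored graph. -/
def LGraph.IsAuto (G : LGraph L V) (f : V → V) : Prop :=
  Function.Bijective f ∧ (∀ x, G.vcol (f x) = G.vcol x) ∧
  (∀ x y, G.ecol (f x) (f y) = G.ecol x y)

/-- `G` is ultrahomogeneous: every isomorphism between finite induced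
substructures extends to an automorphism. -/
def LGraph.Ultra (G : LGraph L V) : Prop :=
  ∀ S : Set V, S.Finite → ∀ f : V → V, Set.InjOn f S →
    (∀ x ∈ S, G.vcol (f x) = G.vcol x) →
    (∀ x ∈ S, ∀ y ∈ S, G.ecol (f x) (f y) = G.ecol x y) →
    ∃ g : V → V, G.IsAuto g ∧ ∀ x ∈ S, g x = f x

private lemma idem_aux {V : Type*} (f : V → V) {m d : ℕ} (hd : 0 < d)
    (h : f^[m] = f^[m + d]) :
    ∃ N, 0 < N ∧ ∀ v, f^[N] (f^[N] v) = f^[N] v := by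
  have step : ∀ i, f^[m + i] = f^[m + i + d] := by
    intro i
    calc f^[m + i] = f^[i] ∘ f^[m] := by rw [← Function.iterate_add, Nat.add_comm]
      _ = f^[i] ∘ f^[m + d] := by rw [h]
      _ = f^[m + i + d] := by rw [← Function.iterate_add]; ring_nf
  have rep : ∀ c i, f^[m + i] = f^[m + i + c * d] := by
    intro c
    induction c with
    | zero => simp
    | succ c ih =>
      intro i
      have h1 := step (i + c * d)
      have h2 : m + (i + c * d) = m + i + c * d := by ring
      rw [h2] at h1
      rw [ih i, h1]; congr 1; ring
  have hNm : m + 1 ≤ (m + 1) * d := Nat.le_mul_of_pos_right (m + 1) hd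
  refine ⟨(m + 1) * d, by omega, ?_⟩
  intro v
  have h2 : f^[(m + 1) * d] ∘ f^[(m + 1) * d] = f^[(m + 1) * d] := by
    rw [← Function.iterate_add]
    have h4 := rep (m + 1) ((m + 1) * d - m)
    have h5 : m + ((m + 1) * d - m) = (m + 1) * d := by omega
    rw [h5] at h4
    exact h4.symm
  exact congrFun h2 v

private lemma exists_idem_pow {V : Type*} [Finite V] (f : V → V) :
    ∃ N, 0 < N ∧ ∀ v, f^[N] (f^[N] v) = f^[N] v := by
  obtain ⟨a, b, hab, hfab⟩ := Finite.exists_ne_map_eq_of_infinite (fun k : ℕ => f^[k])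
  rcases hab.lt_or_gt with h | h
  · have : f^[a] = f^[a + (b - a)] := by rw [show a + (b - a) = b by omega]; exact hfab
    exact idem_aux f (by omega) this
  · have : f^[b] = f^[b + (a - b)] := by rw [show b + (a - b) = a by omega]; exact hfab.symm
    exact idem_aux f (by omega) this

private lemma isEndo_comp (G : LGraph L V) {f g : V → V} (hf : G.IsEndo f) (hg : G.IsEndo g) :
    G.IsEndo (f ∘ g) :=
  ⟨fun x => (hg.1 x).trans (hf.1 _), fun x y => (hg.2 x y).trans (hf.2 _ _)⟩

private lemma isEndo_iterate (G : LGraph L V) {f : V → V} (hf : G.IsEndo f) (n : ℕ) :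
    G.IsEndo f^[n] := by
  induction n with
  | zero => exact ⟨fun x => le_rfl, fun x y => le_rfl⟩
  | succ n ih =>
    refine ⟨fun x => ?_, fun x y => ?_⟩
    · rw [Function.iterate_succ_apply']
      exact (ih.1 x).trans (hf.1 _)
    · rw [Function.iterate_succ_apply', Function.iterate_succ_apply']
      exact (ih.2 x y).trans (hf.2 _ _)

private lemma exists_endo_map (G : LGraph L V) (hMH : G.MH) {a b : V}
    (h : G.vcol a ≤ G.vcol b) : ∃ g, G.IsEndo g ∧ g a = b := by
  obtain ⟨g, hg, hga⟩ := hMH {a} (Set.finite_singleton a) (fun _ => b)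
    (fun p hp q hq _ => by
      rw [Set.mem_singleton_iff] at hp hq; rw [hp, hq])
    ⟨fun p hp => by rw [Set.mem_singleton_iff] at hp; rw [hp]; exact h,
     fun p hp q hq => by
      rw [Set.mem_singleton_iff] at hp hq; rw [hp, hq, G.ecol_irrefl]; exact bot_le⟩
  exact ⟨g, hg, hga a rfl⟩

private lemma key {L V : Type*} [LinearOrder L] [BoundedOrder L] [Finite V]
    (G : LGraph L V) (hMH : G.MH) {x0 y0 : V}
    (he0 : ⊥ < G.ecol x0 y0) (hv0 : G.vcol x0 < G.vcol y0) : False := by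
  classical
  -- choose a bad pair (x, y) with vcol y maximal
  haveI : Nonempty {p : V × V // ⊥ < G.ecol p.1 p.2 ∧ G.vcol p.1 < G.vcol p.2} :=
    ⟨⟨(x0, y0), he0, hv0⟩⟩
  obtain ⟨⟨⟨x, y⟩, hexy, hvxy⟩, hmax'⟩ :=
    Finite.exists_max (fun p : {p : V × V // ⊥ < G.ecol p.1 p.2 ∧ G.vcol p.1 < G.vcol p.2} =>
      G.vcol p.1.2)
  simp only at hexy hvxy
  have hmax : ∀ u v, ⊥ < G.ecol u v → G.vcol u < G.vcol v → G.vcol v ≤ G.vcol y :=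
    fun u v h1 h2 => hmax' ⟨(u, v), h1, h2⟩
  -- orbit lemma
  have horb : ∀ u : V → V, G.IsEndo u → ∀ a : V, ⊥ < G.ecol a (u a) →
      G.vcol a < G.vcol y → G.vcol (u a) = G.vcol y →
      ∀ n : ℕ, ⊥ < G.ecol (u^[n] a) (u (u^[n] a)) ∧ G.vcol (u (u^[n] a)) = G.vcol y := by
    intro u hu a ha1 ha2 ha3 n
    induction n with
    | zero => simpa using ⟨ha1, ha3⟩
    | succ n ih =>
      have h1 : ⊥ < G.ecol (u^[n + 1] a) (u (u^[n + 1] a)) := by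
        rw [Function.iterate_succ_apply']
        exact lt_of_lt_of_le ih.1 (hu.2 _ _)
      refine ⟨h1, ?_⟩
      have h2 : G.vcol y ≤ G.vcol (u (u^[n + 1] a)) := by
        rw [Function.iterate_succ_apply', ← ih.2]
        exact hu.1 _
      rcases eq_or_lt_of_le h2 with h | h
      · exact h.symm
      · have hb : G.vcol (u^[n + 1] a) < G.vcol (u (u^[n + 1] a)) := by
          rw [Function.iterate_succ_apply', ih.2]; rw [Function.iterate_succ_apply'] at h
          exact h
        exact absurd (hmax _ _ h1 hb) (not_le.mpr h)
  -- minimal idempotent endo fixing x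
  haveI : Nonempty {f : V → V // G.IsEndo f ∧ f x = x ∧ ∀ v, f (f v) = f v} :=
    ⟨⟨id, ⟨fun _ => le_rfl, fun _ _ => le_rfl⟩, rfl, fun _ => rfl⟩⟩
  obtain ⟨⟨e, heEndo, hex, heid⟩, hemin'⟩ :=
    Finite.exists_min
      (fun f : {f : V → V // G.IsEndo f ∧ f x = x ∧ ∀ v, f (f v) = f v} =>
        (Set.range f.val).ncard)
  have hemin : ∀ f : V → V, G.IsEndo f → f x = x → (∀ v, f (f v) = f v) →
      (Set.range e).ncard ≤ (Set.range f).ncard :=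
    fun f h1 h2 h3 => hemin' ⟨f, h1, h2, h3⟩
  -- y* := e y
  have heyedge : G.ecol x y ≤ G.ecol x (e y) := by
    have := heEndo.2 x y
    rwa [hex] at this
  have heypos : ⊥ < G.ecol x (e y) := lt_of_lt_of_le hexy heyedge
  have hvy : G.vcol (e y) = G.vcol y := by
    have h1 : G.vcol y ≤ G.vcol (e y) := heEndo.1 y
    have h2 : G.vcol x < G.vcol (e y) := lt_of_lt_of_le hvxy h1
    exact le_antisymm (hmax _ _ heypos h2) h1
  -- q : endo with q x = e y
  obtain ⟨q, hq, hqx⟩ := exists_endo_map G hMH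
    (show G.vcol x ≤ G.vcol (e y) by rw [hvy]; exact hvxy.le)
  -- u := e ∘ q
  set u : V → V := e ∘ q with hu_def
  have hu : G.IsEndo u := isEndo_comp G heEndo hq
  have hux : u x = e y := by
    show e (q x) = e y
    rw [hqx]; exact heid y
  -- idempotent power of u
  obtain ⟨k, hk, hkid⟩ := exists_idem_pow u
  obtain ⟨k', rfl⟩ : ∃ k', k = k' + 1 := ⟨k - 1, by omega⟩
  set z : V := u^[k' + 1] x with hz_def
  have hukz : u^[k' + 1] z = z := hkid x
  -- ecol x z = ⊥
  have hxz : G.ecol x z = ⊥ := by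
    have h1 : G.ecol x z ≤ G.ecol (u^[k' + 1] x) (u^[k' + 1] z) :=
      (isEndo_iterate G hu (k' + 1)).2 x z
    rw [hukz, ← hz_def, G.ecol_irrefl] at h1
    exact le_bot_iff.mp h1
  -- vcol z = vcol y
  have hvz : G.vcol z = G.vcol y := by
    have h := (horb u hu x (by rw [hux]; exact heypos) hvxy (by rw [hux]; exact hvy) k').2
    rw [← Function.iterate_succ_apply' u k' x] at h
    exact h
  have hzx : z ≠ x := by
    intro h
    rw [h] at hvz
    exact hvxy.ne hvz
  have heyx : e y ≠ x := by
    intro h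
    rw [h] at hvy
    exact hvxy.ne hvy
  -- z is in range of e
  have hez : e z = z := by
    have h1 : z = e (q (u^[k'] x)) := Function.iterate_succ_apply' u k' x
    rw [h1]; exact heid _
  -- extend the mono {x, z} → {x, e y}
  obtain ⟨g2, hg2, hg2e⟩ := hMH {x, z} (Set.toFinite _)
    (fun v => if v = x then x else e y)
    (by
      intro a ha b hb hab
      rcases ha with rfl | ha
      · rcases hb with rfl | hb
        · rfl
        · rw [Set.mem_singleton_iff] at hb; subst hb
          simp only [if_pos rfl, if_neg hzx] at hab
          exact absurd hab.symm heyx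
      · rw [Set.mem_singleton_iff] at ha; subst ha
        rcases hb with rfl | hb
        · simp only [if_pos rfl, if_neg hzx] at hab
          exact absurd hab heyx
        · rw [Set.mem_singleton_iff] at hb; subst hb; rfl)
    (by
      constructor
      · intro a ha
        rcases ha with rfl | ha
        · simp only [if_pos rfl]; exact le_rfl
        · rw [Set.mem_singleton_iff] at ha; subst ha
          simp only [if_neg hzx]
          exact le_of_eq (hvz.trans hvy.symm)
      · intro a ha b hb
        rcases ha with rfl | ha
        · rcases hb with rfl | hb
          · rw [G.ecol_irrefl]; exact bot_le
          · rw [Set.mem_singleton_iff] at hb; subst hb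
            rw [hxz]; exact bot_le
        · rw [Set.mem_singleton_iff] at ha; subst ha
          rcases hb with rfl | hb
          · rw [G.ecol_symm, hxz]; exact bot_le
          · rw [Set.mem_singleton_iff] at hb; subst hb
            rw [G.ecol_irrefl]; exact bot_le)
  have hg2x : g2 x = x := by
    have h := hg2e x (Set.mem_insert x _)
    simpa only [if_pos rfl, if_true] using h
  have hg2z : g2 z = e y := by
    have h := hg2e z (Set.mem_insert_of_mem x rfl)
    simpa only [if_neg hzx] using h
  -- h' := e ∘ g2
  set h' : V → V := e ∘ g2 with hh'_def
  have hh' : G.IsEndo h' := isEndo_comp G heEndo hg2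
  have hh'x : h' x = x := by show e (g2 x) = x; rw [hg2x, hex]
  have hh'z : h' z = e y := by show e (g2 z) = e y; rw [hg2z]; exact heid y
  -- idempotent power of h'
  obtain ⟨j, hj, hjid⟩ := exists_idem_pow h'
  obtain ⟨j', rfl⟩ : ∃ j', j = j' + 1 := ⟨j - 1, by omega⟩
  have hk2x : h'^[j' + 1] x = x := Function.iterate_fixed hh'x (j' + 1)
  have hsub : Set.range h'^[j' + 1] ⊆ Set.range e := by
    rintro _ ⟨v, rfl⟩
    rw [Function.iterate_succ_apply']
    exact ⟨g2 (h'^[j'] v), rfl⟩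
  have hcard := hemin (h'^[j' + 1]) (isEndo_iterate G hh' (j' + 1))
    hk2x hjid
  have hrange_eq : Set.range h'^[j' + 1] = Set.range e :=
    Set.eq_of_subset_of_ncard_le hsub hcard (Set.toFinite _)
  -- k₂ fixes z
  have hkz : h'^[j' + 1] z = z := by
    have hzr : z ∈ Set.range h'^[j' + 1] := by
      rw [hrange_eq]
      exact ⟨z, hez⟩
    obtain ⟨w, hw⟩ := hzr
    rw [← hw, hjid w]
  -- final contradiction
  have hfin : G.ecol (h' x) (h' z) ≤ G.ecol (h'^[j' + 1] x) (h'^[j' + 1] z) := by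
    have h := (isEndo_iterate G hh' j').2 (h' x) (h' z)
    rw [← Function.iterate_succ_apply h' j' x, ← Function.iterate_succ_apply h' j' z] at h
    exact h
  rw [hh'x, hh'z, hk2x, hkz, hxz] at hfin
  exact absurd hfin (not_le.mpr heypos)

/-- Lemma 3(b). -/
theorem stmt3 {L V : Type*} [LinearOrder L] [BoundedOrder L] [Finite V]
    (G : LGraph L V) (hMH : G.MH) :
    ∀ x y : V, ⊥ < G.ecol x y → G.vcol x = G.vcol y := by
  intro x y hxy
  by_contra hne
  rcases lt_or_gt_of_ne hne with h | h
  · exact key G hMH hxy h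
  · exact key G hMH (by rw [G.ecol_symm]; exact hxy) h
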